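/- The Λ-deformed bracket on generators, defined by {w^p_{m,a}, w^q_{n,b}}_Λ = (m(q-1)-n(p-1)) w^{p+q-2}_{m+n,a+b} - Λ(a(q-2)-b(p-2)) w^{p+q-1}_{m+n,a+b}, satisfies the Jacobi identity: for all indices, {w^p_{m,a},{w^q_{n,b},w^r_{k,c}}} + {w^q_{n,b},{w^r_{k,c},w^p_{m,a}}} + {w^r_{k,c},{w^p_{m,a},w^q_{n,b}}} = 0. -/
import Mathlib


/-- Index set for the generators `w^p_{m,a}`: triples `(p, m, a)` of rationals. -/
abbrev Idx : Type := ℚ × ℚ × ℚ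

/-- The Λ-deformed bracket of two basis generators:
`{w^p_{m,a}, w^q_{n,b}}_Λ = (m(q-1)-n(p-1)) w^{p+q-2}_{m+n,a+b}
                            - Λ(a(q-2)-b(p-2)) w^{p+q-1}_{m+n,a+b}`. -/
noncomputable def wbr {K : Type*} [Field K] [CharZero K] (Λ : K) (i j : Idx) : Idx →₀ K :=
  ((i.2.1 * (j.1 - 1) - j.2.1 * (i.1 - 1) : ℚ) : K) •
      Finsupp.single (i.1 + j.1 - 2, i.2.1 + j.2.1, i.2.2 + j.2.2) (1 : K)
    - (Λ * ((i.2.2 * (j.1 - 2) - j.2.2 * (i.1 - 2) : ℚ) : K)) •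
      Finsupp.single (i.1 + j.1 - 1, i.2.1 + j.2.1, i.2.2 + j.2.2) (1 : K)

/-- Bilinear extension of the bracket to the free module on the generators. -/
noncomputable def br {K : Type*} [Field K] [CharZero K] (Λ : K) (f g : Idx →₀ K) : Idx →₀ K :=
  f.sum fun i x => g.sum fun j y => (x * y) • wbr Λ i j

/-- Antisymmetry of the bracket on generators. -/
lemma wbr_anti {K : Type*} [Field K] [CharZero K] (Λ : K) (i j : Idx) :
    wbr Λ i j = - wbr Λ j i := by
  simp only [wbr]
  rw [add_comm j.1 i.1, add_comm j.2.1 i.2.1, add_comm j.2.2 i.2.2]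
  push_cast
  module

/-- Antisymmetry of the extended bracket. -/
lemma br_anti {K : Type*} [Field K] [CharZero K] (Λ : K) (f g : Idx →₀ K) :
    br Λ f g = - br Λ g f := by
  rw [br, br, Finsupp.sum_comm]
  rw [← Finsupp.sum_neg]
  apply Finsupp.sum_congr
  intro j _
  rw [← Finsupp.sum_neg]
  apply Finsupp.sum_congr
  intro i _
  rw [wbr_anti, smul_neg, mul_comm]

/-- The bracket with a single generator on the left is a linear combination. -/
lemma br_single {K : Type*} [Field K] [CharZero K] (Λ : K) (i : Idx) (g : Idx →₀ K) :
    br Λ (Finsupp.single i 1) g = Finsupp.linearCombination K (wbr Λ i) g := by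
  rw [br, Finsupp.linearCombination_apply, Finsupp.sum_single_index]
  · simp
  · simp [Finsupp.sum]

/-- The Jacobi identity on generators. -/
lemma jac {K : Type*} [Field K] [CharZero K] (Λ : K) (i j k : Idx) :
    br Λ (Finsupp.single i 1) (br Λ (Finsupp.single j 1) (Finsupp.single k 1))
      + br Λ (Finsupp.single j 1) (br Λ (Finsupp.single k 1) (Finsupp.single i 1))
      + br Λ (Finsupp.single k 1) (br Λ (Finsupp.single i 1) (Finsupp.single j 1)) = 0 := by
  obtain ⟨p, m, a⟩ := i
  obtain ⟨q, n, b⟩ := j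
  obtain ⟨r, k', c⟩ := k
  simp only [br_single, Finsupp.linearCombination_single, one_smul]
  simp only [wbr, map_sub, map_smul, Finsupp.linearCombination_single]
  push_cast
  ring_nf
  module

/-- The Λ-deformed celestial chiral bracket is antisymmetric and satisfies the
Jacobi identity, hence defines a Lie algebra. -/
theorem lambda_deformed_bracket_jacobi {K : Type*} [Field K] [CharZero K] (Λ : K) :
    (∀ f g : Idx →₀ K, br Λ f g = - br Λ g f) ∧
    (∀ i j k : Idx,
      br Λ (Finsupp.single i 1) (br Λ (Finsupp.single j 1) (Finsupp.single k 1))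
      + br Λ (Finsupp.single j 1) (br Λ (Finsupp.single k 1) (Finsupp.single i 1))
      + br Λ (Finsupp.single k 1) (br Λ (Finsupp.single i 1) (Finsupp.single j 1)) = 0) := by
  exact ⟨br_anti Λ, jac Λ⟩
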